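/- Let (X_n)_{n∈ℕ} and (Y_n)_{n∈ℕ} be sequences of linear orders on subsets of ℕ such that for every n, at least one of X_n, Y_n is well-founded. Let U = Σ_{n∈ℕ} (ℚ_q*Y_n)*X_n. Then U is a well order, and for every linear order X on a subset of ℕ and every n such that X_n is not well-founded, X*Y_n is a well order with |X*Y_n| < |U|. -/

import Mathlib

/-- A tree on ℕ: a set of finite sequences of naturals closed under initial segments. -/
def IsTree (T : Set (List ℕ)) : Prop :=
  ∀ s ∈ T, ∀ t : List ℕ, t <+: s → t ∈ T

/-- `x : ℕ → ℕ` is a branch of `T`: all of its finite initial segments belong to `T`. -/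
def IsBranch (T : Set (List ℕ)) (x : ℕ → ℕ) : Prop :=
  ∀ n : ℕ, (List.range n).map x ∈ T

/-- `[T]`, the set of branches of `T`. -/
def Branches (T : Set (List ℕ)) : Set (ℕ → ℕ) := {x | IsBranch T x}

/-- The Kleene–Brouwer ordering on finite sequences of naturals: `s <_KB t` iff
`t` is a proper initial segment of `s`, or at the first position where `s` and `t`
differ, the entry of `s` is smaller. -/
def KB (s t : List ℕ) : Prop :=
  (t <+: s ∧ t ≠ s) ∨
    ∃ i, i < s.length ∧ i < t.length ∧ (∀ j, j < i → s.getD j 0 = t.getD j 0) ∧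
      s.getD i 0 < t.getD i 0

/-- `r` is a strict linear order on the set `X`. -/
def IsLinOrdOn {α : Type*} (X : Set α) (r : α → α → Prop) : Prop :=
  (∀ a ∈ X, ∀ b ∈ X, ∀ c ∈ X, r a b → r b c → r a c) ∧
  (∀ a ∈ X, ¬r a a) ∧
  (∀ a ∈ X, ∀ b ∈ X, r a b ∨ a = b ∨ r b a)

/-- `r` is a well order on the set `X`: a strict linear order on `X` that is
well-founded on `X`. -/
def IsWellOrdOn {α : Type*} (X : Set α) (r : α → α → Prop) : Prop :=
  IsLinOrdOn X r ∧ WellFounded (Subrel r X)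

/-- The double descent tree `T(X,Y)` of two linear orders on subsets of ℕ:
finite sequences of (coded) pairs `(m_i, n_i)` with the `m_i` strictly descending
in `X` and the `n_i` strictly descending in `Y`.  Pairs are coded by `Nat.pair`. -/
def DDT (X Y : Set ℕ) (rX rY : ℕ → ℕ → Prop) : Set (List ℕ) :=
  {l | (∀ i, i < l.length → (Nat.unpair (l.getD i 0)).1 ∈ X ∧ (Nat.unpair (l.getD i 0)).2 ∈ Y) ∧
       (∀ i, i + 1 < l.length →
         rX (Nat.unpair (l.getD (i + 1) 0)).1 (Nat.unpair (l.getD i 0)).1 ∧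
         rY (Nat.unpair (l.getD (i + 1) 0)).2 (Nat.unpair (l.getD i 0)).2)}

/-- A (candidate) linear order on a subset of ℕ: a domain together with a
strict order relation. -/
abbrev NatOrd := Set ℕ × (ℕ → ℕ → Prop)

/-- `A` is a linear order on a subset of ℕ. -/
def IsLinN (A : NatOrd) : Prop := IsLinOrdOn A.1 A.2

/-- `A` is well-founded (on its domain). -/
def WFN (A : NatOrd) : Prop := WellFounded (Subrel A.2 A.1)

/-- `A` is a well order on a subset of ℕ. -/
def IsWON (A : NatOrd) : Prop := IsLinN A ∧ WFN A

/-- A fixed injective coding of finite sequences of naturals into ℕ. -/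
def listCode : List ℕ → ℕ := Encodable.encode

/-- `A*B`, regarded as a linear order on a subset of ℕ: the Kleene–Brouwer ordering
of the double descent tree `T(A,B)`, transported to ℕ along the injective coding
`listCode`. -/
def ddStar (A B : NatOrd) : NatOrd :=
  (listCode '' DDT A.1 B.1 A.2 B.2,
   fun a b => ∃ s ∈ DDT A.1 B.1 A.2 B.2, ∃ t ∈ DDT A.1 B.1 A.2 B.2,
     listCode s = a ∧ listCode t = b ∧ KB s t)

/-- `Σ_{n∈ℕ} L n`: the sum of the sequence of orders `L`, with domain coded into ℕ
via `Nat.pair n a` for `a` in the domain of `L n`, ordered lexicographically. -/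
def sigmaOrd (L : ℕ → NatOrd) : NatOrd :=
  ({x | x.unpair.2 ∈ (L x.unpair.1).1},
   fun x y => x.unpair.1 < y.unpair.1 ∨
     (x.unpair.1 = y.unpair.1 ∧ (L x.unpair.1).2 x.unpair.2 y.unpair.2))

/-- `A + B`: the sum of two orders, every element of `A` preceding every element
of `B`, with domain coded into ℕ. -/
def addOrd (A B : NatOrd) : NatOrd :=
  ({x | (x.unpair.1 = 0 ∧ x.unpair.2 ∈ A.1) ∨ (x.unpair.1 = 1 ∧ x.unpair.2 ∈ B.1)},
   fun x y => x.unpair.1 < y.unpair.1 ∨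
     (x.unpair.1 = 0 ∧ y.unpair.1 = 0 ∧ A.2 x.unpair.2 y.unpair.2) ∨
     (x.unpair.1 = 1 ∧ y.unpair.1 = 1 ∧ B.2 x.unpair.2 y.unpair.2))

/-- The linear order `ℚ_q` on ℕ induced by a bijection `q : ℕ → ℚ`. -/
def ratOrd (q : ℕ → ℚ) : NatOrd := (Set.univ, fun m n => q m < q n)

/-- The well order `U = Σ_{n∈ℕ} (ℚ_q*Y_n)*X_n`. -/
def Uord (q : ℕ → ℚ) (X Y : ℕ → NatOrd) : NatOrd :=
  sigmaOrd fun n => ddStar (ddStar (ratOrd q) (Y n)) (X n)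

/-! ### Basic list lemmas -/

lemma getD_of_prefix {u s : List ℕ} (h : u <+: s) {j : ℕ} (hj : j < u.length) :
    u.getD j 0 = s.getD j 0 := by
  obtain ⟨t, rfl⟩ := h
  rw [List.getD_append _ _ _ _ hj]

lemma prefix_of_getD {u s : List ℕ} (hl : u.length ≤ s.length)
    (h : ∀ j, j < u.length → u.getD j 0 = s.getD j 0) : u <+: s := by
  have : u = s.take u.length := by
    apply List.ext_getElem
    · simp [Nat.min_eq_left hl]
    · intro i h1 h2
      have hi : i < u.length := h1
      have his : i < s.length := lt_of_lt_of_le hi hl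
      have := h i hi
      rw [List.getD_eq_getElem u 0 hi, List.getD_eq_getElem s 0 his] at this
      simpa using this
  rw [this]
  exact List.take_prefix _ _

lemma eq_of_getD {u s : List ℕ} (hl : u.length = s.length)
    (h : ∀ j, j < u.length → u.getD j 0 = s.getD j 0) : u = s :=
  List.IsPrefix.eq_of_length (prefix_of_getD hl.le h) hl

lemma take_eq_take_of_getD {s t : List ℕ} {i : ℕ} (hs : i ≤ s.length) (ht : i ≤ t.length)
    (h : ∀ j, j < i → s.getD j 0 = t.getD j 0) : s.take i = t.take i := by
  apply eq_of_getD
  · simp [Nat.min_eq_left hs, Nat.min_eq_left ht]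
  · intro j hj
    have hj' : j < i := by simpa [Nat.min_eq_left hs] using hj
    have h1 : (s.take i).getD j 0 = s.getD j 0 := getD_of_prefix (List.take_prefix _ _) hj
    have h2 : (t.take i).getD j 0 = t.getD j 0 :=
      getD_of_prefix (List.take_prefix _ _) (by simpa [Nat.min_eq_left ht] using hj')
    rw [h1, h2]; exact h j hj'

lemma take_succ_getD {s : List ℕ} {i : ℕ} (h : i < s.length) :
    s.take (i+1) = s.take i ++ [s.getD i 0] := by
  rw [List.take_succ]; simp [List.getElem?_eq_getElem h, List.getD_eq_getElem s 0 h]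

/-! ### KB is a strict linear order on all of `List ℕ` -/

lemma KB_irrefl (s : List ℕ) : ¬ KB s s := by
  rintro (⟨-, hne⟩ | ⟨i, -, -, -, hlt⟩)
  · exact hne rfl
  · exact lt_irrefl _ hlt

lemma KB_of_proper_prefix {s t : List ℕ} (h : t <+: s) (hne : t ≠ s) : KB s t := Or.inl ⟨h, hne⟩

lemma KB_length_lt {s t : List ℕ} (h : t <+: s) (hne : t ≠ s) : t.length < s.length := by
  rcases lt_or_eq_of_le h.length_le with h1 | h1
  · exact h1
  · exact absurd (h.eq_of_length h1) hne

lemma KB_trans {s t u : List ℕ} (h1 : KB s t) (h2 : KB t u) : KB s u := by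
  rcases h1 with ⟨hp1, hne1⟩ | ⟨i, hi1, hi2, hprev, hlt⟩
  · rcases h2 with ⟨hp2, hne2⟩ | ⟨i, hi1, hi2, hprev, hlt⟩
    · refine Or.inl ⟨hp2.trans hp1, ?_⟩
      rintro rfl
      exact hne1 (hp1.eq_of_length (le_antisymm hp1.length_le hp2.length_le))
    · refine Or.inr ⟨i, lt_of_lt_of_le hi1 hp1.length_le, hi2, ?_, ?_⟩
      · intro j hj
        rw [← getD_of_prefix hp1 (lt_trans hj hi1)]; exact hprev j hj
      · rw [← getD_of_prefix hp1 hi1]; exact hlt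
  · rcases h2 with ⟨hp2, hne2⟩ | ⟨i', hi1', hi2', hprev', hlt'⟩
    · -- u <+: t, s,t differ first at i
      rcases lt_or_ge i u.length with hiu | hiu
      · refine Or.inr ⟨i, hi1, hiu, ?_, ?_⟩
        · intro j hj
          rw [getD_of_prefix hp2 (lt_trans hj hiu)]; exact hprev j hj
        · rw [getD_of_prefix hp2 hiu]; exact hlt
      · refine Or.inl ⟨prefix_of_getD (le_trans hiu (le_of_lt hi1)) ?_, ?_⟩
        · intro j hj
          rw [getD_of_prefix hp2 hj]
          exact (hprev j (lt_of_lt_of_le hj hiu)).symm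
        · rintro rfl
          exact absurd (getD_of_prefix hp2 hi1 ▸ hlt) (lt_irrefl _)
          -- s = u: then s <+: t so s.getD i 0 = t.getD i 0, contradiction with hlt
      -- note: in the rfl case above, hp2 : u <+: t with u = s
    · rcases lt_trichotomy i i' with hii | hii | hii
      · refine Or.inr ⟨i, hi1, lt_trans hii hi2', ?_, ?_⟩
        · intro j hj
          rw [hprev j hj]; exact hprev' j (lt_trans hj hii)
        · rw [← hprev' i hii]; exact hlt
      · subst hii
        exact Or.inr ⟨i, hi1, hi2', fun j hj => (hprev j hj).trans (hprev' j hj),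
          lt_trans hlt hlt'⟩
      · refine Or.inr ⟨i', lt_trans hii hi1, hi2', ?_, ?_⟩
        · intro j hj
          rw [hprev j (lt_trans hj hii)]; exact hprev' j hj
        · rw [hprev i' hii]; exact hlt'

lemma KB_total {s t : List ℕ} (h : s ≠ t) : KB s t ∨ KB t s := by
  classical
  by_cases hd : ∃ j, j < min s.length t.length ∧ s.getD j 0 ≠ t.getD j 0
  · obtain ⟨j0, hj0, hne0⟩ := hd
    have hex : ∃ j, s.getD j 0 ≠ t.getD j 0 := ⟨j0, hne0⟩
    set i := Nat.find hex with hi_def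
    have hile : i ≤ j0 := Nat.find_min' hex hne0
    have hi : i < min s.length t.length := lt_of_le_of_lt hile hj0
    have hprev : ∀ j, j < i → s.getD j 0 = t.getD j 0 := fun j hj =>
      not_not.mp (Nat.find_min hex hj)
    rcases lt_trichotomy (s.getD i 0) (t.getD i 0) with hlt | heq | hgt
    · exact Or.inl (Or.inr ⟨i, lt_of_lt_of_le hi (min_le_left _ _),
        lt_of_lt_of_le hi (min_le_right _ _), hprev, hlt⟩)
    · exact absurd heq (Nat.find_spec hex)
    · exact Or.inr (Or.inr ⟨i, lt_of_lt_of_le hi (min_le_right _ _),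
        lt_of_lt_of_le hi (min_le_left _ _), fun j hj => (hprev j hj).symm, hgt⟩)
  · push_neg at hd
    rcases lt_trichotomy s.length t.length with hl | hl | hl
    · refine Or.inr (KB_of_proper_prefix (prefix_of_getD hl.le ?_) ?_)
      · intro j hj; exact hd j (by simp [lt_min_iff]; exact ⟨hj, lt_of_lt_of_le hj hl.le⟩)
      · rintro rfl; exact lt_irrefl _ hl
    · exact absurd (eq_of_getD hl fun j hj =>
        hd j (by rw [lt_min_iff]; exact ⟨hj, hl ▸ hj⟩)) h
    · refine Or.inl (KB_of_proper_prefix (prefix_of_getD hl.le ?_) ?_)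
      · intro j hj
        exact (hd j (by rw [lt_min_iff]; exact ⟨lt_of_lt_of_le hj hl.le, hj⟩)).symm
      · rintro rfl; exact lt_irrefl _ hl

lemma KB_asymm {s t : List ℕ} (h1 : KB s t) (h2 : KB t s) : False :=
  KB_irrefl s (KB_trans h1 h2)

/-! ### Well-foundedness of KB on trees without branches -/

lemma no_descending {α : Type*} {r : α → α → Prop} (hw : WellFounded r) (f : ℕ → α)
    (hf : ∀ k, r (f (k+1)) (f k)) : False := by
  obtain ⟨a, ⟨k0, rfl⟩, hmin⟩ := hw.has_min (Set.range f) ⟨f 0, 0, rfl⟩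
  exact hmin (f (k0+1)) ⟨k0+1, rfl⟩ (hf k0)

lemma exists_descending {α : Type*} {r : α → α → Prop} (h : ¬ WellFounded r) :
    ∃ f : ℕ → α, ∀ k, r (f (k+1)) (f k) := by
  classical
  rw [WellFounded.wellFounded_iff_has_min] at h
  push_neg at h
  obtain ⟨S, hS, hmin⟩ := h
  choose nxt hnxt1 hnxt2 using hmin
  obtain ⟨a0, ha0⟩ := hS
  let g : ℕ → {a // a ∈ S} := fun k =>
    Nat.rec ⟨a0, ha0⟩ (fun _ p => ⟨nxt p.1 p.2, hnxt1 p.1 p.2⟩) k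
  exact ⟨fun k => (g k).1, fun k => hnxt2 (g k).1 (g k).2⟩

section KBwf

variable {f : ℕ → List ℕ}

private lemma chain_KB (hf : ∀ k, KB (f (k+1)) (f k)) : ∀ k l, k < l → KB (f l) (f k) := by
  intro k l
  induction l with
  | zero => exact fun h => absurd h (Nat.not_lt_zero k)
  | succ l ih =>
    intro hkl
    rcases lt_or_eq_of_le (Nat.lt_succ_iff.mp hkl) with h1 | h1
    · exact KB_trans (hf l) (ih h1)
    · rw [h1]; exact hf l

private lemma f_inj (hf : ∀ k, KB (f (k+1)) (f k)) : Function.Injective f := by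
  intro k l hkl
  by_contra hne
  rcases Ne.lt_or_gt hne with h1 | h1
  · exact KB_irrefl _ (hkl ▸ chain_KB hf k l h1)
  · exact KB_irrefl _ (hkl ▸ chain_KB hf l k h1)

/-- From some index on, `f k` is never equal to the fixed list `σ`. -/
private lemma eventually_ne (hf : ∀ k, KB (f (k+1)) (f k)) (σ : List ℕ) (K : ℕ) :
    ∃ K', K ≤ K' ∧ ∀ k, K' ≤ k → σ ≠ f k := by
  classical
  by_cases h : ∃ k, f k = σ
  · refine ⟨max K (Classical.choose h + 1), le_max_left _ _, fun k hk heq => ?_⟩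
    have : k = Classical.choose h := f_inj hf (heq.symm.trans (Classical.choose_spec h).symm)
    omega
  · exact ⟨K, le_rfl, fun k _ heq => h ⟨k, heq.symm⟩⟩

/-- The key extension step: if `σ` is eventually a proper prefix of all `f k`, then
some `σ ++ [v]` is too. -/
private lemma step_lemma (hf : ∀ k, KB (f (k+1)) (f k)) (σ : List ℕ) (K : ℕ)
    (hσ : ∀ k, K ≤ k → σ <+: f k ∧ σ ≠ f k) :
    ∃ v K', ∀ k, K' ≤ k → (σ ++ [v]) <+: f k ∧ (σ ++ [v]) ≠ f k := by
  classical
  have hlen : ∀ k, K ≤ k → σ.length < (f k).length := fun k hk =>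
    KB_length_lt (hσ k hk).1 (hσ k hk).2
  set a : ℕ → ℕ := fun k => (f k).getD σ.length 0 with ha
  have hmono : ∀ k, K ≤ k → a (k+1) ≤ a k := by
    intro k hk
    show (f (k+1)).getD σ.length 0 ≤ (f k).getD σ.length 0
    rcases hf k with ⟨hp, hne⟩ | ⟨i, hi1, hi2, hprev, hlt⟩
    · exact le_of_eq (getD_of_prefix hp (hlen k hk)).symm
    · have hige : σ.length ≤ i := by
        by_contra hcon
        push_neg at hcon
        have e1 : (f (k+1)).getD i 0 = σ.getD i 0 :=
          (getD_of_prefix (hσ (k+1) (le_trans hk (Nat.le_succ k))).1 hcon).symm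
        have e2 : (f k).getD i 0 = σ.getD i 0 := (getD_of_prefix (hσ k hk).1 hcon).symm
        rw [e1, e2] at hlt
        exact lt_irrefl _ hlt
      rcases lt_or_eq_of_le hige with h1 | h1
      · exact le_of_eq (hprev _ h1)
      · rw [h1]; exact le_of_lt hlt
  have hmono' : ∀ k l, K ≤ k → k ≤ l → a l ≤ a k := by
    have key : ∀ k, K ≤ k → ∀ d, a (k + d) ≤ a k := by
      intro k hk d
      induction d with
      | zero => exact le_rfl
      | succ d ih =>
        exact le_trans (hmono (k + d) (by omega)) ih
    intro k l hk hkl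
    have : l = k + (l - k) := by omega
    rw [this]
    exact key k hk _
  have hne2 : (a '' {k | K ≤ k}).Nonempty := ⟨a K, ⟨K, show K ≤ K from le_rfl, rfl⟩⟩
  obtain ⟨k0, hk0K, hk0⟩ := Nat.sInf_mem hne2
  have hk0K' : K ≤ k0 := hk0K
  have hconst : ∀ k, k0 ≤ k → a k = a k0 := by
    intro k hk
    refine le_antisymm (hmono' k0 k hk0K' hk) ?_
    rw [hk0]
    exact Nat.sInf_le ⟨k, le_trans hk0K' hk, rfl⟩
  obtain ⟨K', hK'ge, hK'⟩ := eventually_ne hf (σ ++ [a k0]) k0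
  refine ⟨a k0, K', fun k hk => ⟨?_, hK' k hk⟩⟩
  have hkK : K ≤ k := le_trans hk0K' (le_trans hK'ge hk)
  refine prefix_of_getD (by simpa using hlen k hkK) ?_
  intro j hj
  simp only [List.length_append, List.length_singleton] at hj
  rcases lt_or_eq_of_le (Nat.lt_succ_iff.mp hj) with h1 | h1
  · rw [List.getD_append _ _ _ _ (by simpa using h1)]
    exact getD_of_prefix (hσ k hkK).1 h1
  · subst h1
    have e1 : (σ ++ [a k0]).getD σ.length 0 = a k0 := by
      rw [List.getD_append_right _ _ _ _ le_rfl]; simp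
    rw [e1]
    exact (hconst k (le_trans hK'ge hk)).symm

/-- KB is well-founded on any tree without infinite branches. -/
theorem KB_wf {T : Set (List ℕ)} (hT : IsTree T) (hB : ∀ x, ¬ IsBranch T x) :
    WellFounded (Subrel KB T) := by
  classical
  by_contra hw
  obtain ⟨g, hg⟩ := exists_descending hw
  set f : ℕ → List ℕ := fun k => (g k).1 with hfdef
  have hf : ∀ k, KB (f (k+1)) (f k) := fun k => hg k
  have hfT : ∀ k, f k ∈ T := fun k => (g k).2
  have h0 : ∃ K0 : ℕ, ∀ k, K0 ≤ k → ([] : List ℕ) <+: f k ∧ ([] : List ℕ) ≠ f k := by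
    obtain ⟨K', _, hK'⟩ := eventually_ne hf [] 0
    exact ⟨K', fun k hk => ⟨List.nil_prefix, hK' k hk⟩⟩
  set Inv : List ℕ × ℕ → Prop := fun p => ∀ k, p.2 ≤ k → p.1 <+: f k ∧ p.1 ≠ f k with hInv
  have hstep : ∀ p : {p // Inv p}, ∃ v, ∃ K' : ℕ, Inv (p.1.1 ++ [v], K') := by
    rintro ⟨⟨σ, K⟩, hp⟩
    obtain ⟨v, K', hvK⟩ := step_lemma hf σ K hp
    exact ⟨v, K', hvK⟩
  let g2 : ℕ → {p // Inv p} := fun n => Nat.rec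
    ⟨(([] : List ℕ), Classical.choose h0), fun k hk => Classical.choose_spec h0 k hk⟩
    (fun _ p => ⟨(p.1.1 ++ [Classical.choose (hstep p)],
        Classical.choose (Classical.choose_spec (hstep p))),
        Classical.choose_spec (Classical.choose_spec (hstep p))⟩) n
  have hg2succ : ∀ n, (g2 (n+1)).1.1 = (g2 n).1.1 ++ [Classical.choose (hstep (g2 n))] :=
    fun n => rfl
  have hg2len : ∀ n, (g2 n).1.1.length = n := by
    intro n
    induction n with
    | zero => rfl
    | succ n ih => rw [hg2succ n]; simp [ih]
  set x : ℕ → ℕ := fun n => (g2 (n+1)).1.1.getD n 0 with hx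
  have hxval : ∀ n, x n = Classical.choose (hstep (g2 n)) := by
    intro n
    show (g2 (n+1)).1.1.getD n 0 = _
    rw [hg2succ n, List.getD_append_right _ _ _ _ (le_of_eq (hg2len n))]
    simp [hg2len n]
  have hxr : ∀ n, (List.range n).map x = (g2 n).1.1 := by
    intro n
    induction n with
    | zero => rfl
    | succ n ih =>
      rw [List.range_succ, List.map_append, ih, hg2succ n]
      simp [hxval n]
  apply hB x
  intro n
  rw [hxr n]
  exact hT _ (hfT ((g2 n).1.2)) _ (((g2 n).2) (g2 n).1.2 le_rfl).1

end KBwf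

/-! ### DDT and ddStar basics -/

lemma DDT_isTree (Xs Ys : Set ℕ) (rX rY : ℕ → ℕ → Prop) : IsTree (DDT Xs Ys rX rY) := by
  rintro s ⟨hmem, hdesc⟩ t ht
  refine ⟨fun i hi => ?_, fun i hi => ?_⟩
  · rw [getD_of_prefix ht hi]
    exact hmem i (lt_of_lt_of_le hi ht.length_le)
  · rw [getD_of_prefix ht hi, getD_of_prefix ht (by omega)]
    exact hdesc i (lt_of_lt_of_le hi ht.length_le)

lemma nil_mem_DDT (Xs Ys : Set ℕ) (rX rY : ℕ → ℕ → Prop) : [] ∈ DDT Xs Ys rX rY :=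
  ⟨fun i hi => absurd hi (by simp), fun i hi => absurd hi (by simp)⟩

lemma range_map_getD (x : ℕ → ℕ) {i n : ℕ} (h : i < n) :
    ((List.range n).map x).getD i 0 = x i := by
  rw [List.getD_eq_getElem _ _ (by simpa using h)]
  simp

lemma branch_DDT {Xs Ys : Set ℕ} {rX rY : ℕ → ℕ → Prop} {x : ℕ → ℕ}
    (hx : IsBranch (DDT Xs Ys rX rY) x) :
    (∀ k, (Nat.unpair (x k)).1 ∈ Xs ∧ (Nat.unpair (x k)).2 ∈ Ys) ∧
    (∀ k, rX (Nat.unpair (x (k+1))).1 (Nat.unpair (x k)).1 ∧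
          rY (Nat.unpair (x (k+1))).2 (Nat.unpair (x k)).2) := by
  constructor
  · intro k
    obtain ⟨hmem, -⟩ := hx (k+1)
    have := hmem k (by simp)
    rwa [range_map_getD x (Nat.lt_succ_self k)] at this
  · intro k
    obtain ⟨-, hdesc⟩ := hx (k+2)
    have := hdesc k (by simp)
    rwa [range_map_getD x (by omega), range_map_getD x (by omega)] at this

lemma noBranch_DDT_left {Xs Ys : Set ℕ} {rX rY : ℕ → ℕ → Prop}
    (hw : WellFounded (Subrel rX Xs)) (x : ℕ → ℕ) : ¬ IsBranch (DDT Xs Ys rX rY) x := by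
  intro hx
  obtain ⟨hmem, hdesc⟩ := branch_DDT hx
  exact no_descending hw (fun k => ⟨(Nat.unpair (x k)).1, (hmem k).1⟩) (fun k => (hdesc k).1)

lemma noBranch_DDT_right {Xs Ys : Set ℕ} {rX rY : ℕ → ℕ → Prop}
    (hw : WellFounded (Subrel rY Ys)) (x : ℕ → ℕ) : ¬ IsBranch (DDT Xs Ys rX rY) x := by
  intro hx
  obtain ⟨hmem, hdesc⟩ := branch_DDT hx
  exact no_descending hw (fun k => ⟨(Nat.unpair (x k)).2, (hmem k).2⟩) (fun k => (hdesc k).2)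

lemma listCode_inj : Function.Injective listCode := Encodable.encode_injective

/-- `ddStar A B` is always a linear order on its domain. -/
lemma ddStar_linear (A B : NatOrd) : IsLinN (ddStar A B) := by
  refine ⟨?_, ?_, ?_⟩
  · rintro a ⟨s, hs, rfl⟩ b ⟨t, ht, rfl⟩ c ⟨u, hu, rfl⟩
      ⟨s', hs', t', ht', hcs, hct, h1⟩ ⟨t'', ht'', u', hu', hct', hcu, h2⟩
    have e1 : s' = s := listCode_inj hcs
    have e2 : t' = t := listCode_inj hct
    have e3 : t'' = t := listCode_inj hct'
    have e4 : u' = u := listCode_inj hcu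
    have h1' : KB s t := by rwa [e1, e2] at h1
    have h2' : KB t u := by rwa [e3, e4] at h2
    exact ⟨s, hs, u, hu, rfl, rfl, KB_trans h1' h2'⟩
  · rintro a ⟨s, hs, rfl⟩ ⟨s', hs', t', ht', hcs, hct, h1⟩
    have e1 : s' = s := listCode_inj hcs
    have e2 : t' = s := listCode_inj hct
    rw [e1, e2] at h1
    exact KB_irrefl s h1
  · rintro a ⟨s, hs, rfl⟩ b ⟨t, ht, rfl⟩
    by_cases hst : s = t
    · exact Or.inr (Or.inl (by rw [hst]))
    · rcases KB_total hst with h1 | h1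
      · exact Or.inl ⟨s, hs, t, ht, rfl, rfl, h1⟩
      · exact Or.inr (Or.inr ⟨t, ht, s, hs, rfl, rfl, h1⟩)

/-- If the double descent tree has no branches, `ddStar A B` is well-founded. -/
lemma ddStar_wf {A B : NatOrd} (hB : ∀ x, ¬ IsBranch (DDT A.1 B.1 A.2 B.2) x) :
    WFN (ddStar A B) := by
  have hwf := KB_wf (DDT_isTree A.1 B.1 A.2 B.2) hB
  have : Subrelation (Subrel (ddStar A B).2 (ddStar A B).1)
      (InvImage (Subrel KB (DDT A.1 B.1 A.2 B.2))
        (fun a : (ddStar A B).1 => (⟨Classical.choose a.2, (Classical.choose_spec a.2).1⟩ :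
          {l // l ∈ DDT A.1 B.1 A.2 B.2}))) := by
    rintro a b ⟨s', hs', t', ht', hcs, hct, h1⟩
    have ea : Classical.choose a.2 = s' :=
      listCode_inj ((Classical.choose_spec a.2).2.trans hcs.symm)
    have eb : Classical.choose b.2 = t' :=
      listCode_inj ((Classical.choose_spec b.2).2.trans hct.symm)
    show KB (Classical.choose a.2) (Classical.choose b.2)
    rw [ea, eb]; exact h1
  exact Subrelation.wf this (InvImage.wf _ hwf)

lemma WFN_ddStar_ratOrd {q : ℕ → ℚ} {B : NatOrd} (hB : WFN B) : WFN (ddStar (ratOrd q) B) :=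
  ddStar_wf (fun x => noBranch_DDT_right hB x)

/-! ### Sigma order basics -/

lemma sigma_linear {L : ℕ → NatOrd} (hL : ∀ n, IsLinN (L n)) : IsLinN (sigmaOrd L) := by
  refine ⟨?_, ?_, ?_⟩
  · rintro a ha b hb c hc (h1 | ⟨h1, h1'⟩) (h2 | ⟨h2, h2'⟩)
    · exact Or.inl (lt_trans h1 h2)
    · exact Or.inl (h2 ▸ h1)
    · exact Or.inl (h1 ▸ h2)
    · refine Or.inr ⟨h1.trans h2, ?_⟩
      have hb' : b.unpair.2 ∈ (L a.unpair.1).1 := by rw [h1]; exact hb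
      have hc' : c.unpair.2 ∈ (L a.unpair.1).1 := by rw [h1.trans h2]; exact hc
      have h2'' : (L a.unpair.1).2 b.unpair.2 c.unpair.2 := by rw [h1]; exact h2'
      exact (hL a.unpair.1).1 _ ha _ hb' _ hc' h1' h2''
  · rintro a ha (h1 | ⟨-, h1'⟩)
    · exact lt_irrefl _ h1
    · exact (hL a.unpair.1).2.1 _ ha h1'
  · rintro a ha b hb
    rcases lt_trichotomy a.unpair.1 b.unpair.1 with h1 | h1 | h1
    · exact Or.inl (Or.inl h1)
    · have hb' : b.unpair.2 ∈ (L a.unpair.1).1 := by rw [h1]; exact hb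
      rcases (hL a.unpair.1).2.2 _ ha _ hb' with h2 | h2 | h2
      · exact Or.inl (Or.inr ⟨h1, h2⟩)
      · refine Or.inr (Or.inl ?_)
        have := Nat.pair_unpair a
        have hb2 := Nat.pair_unpair b
        rw [← this, ← hb2, h1, h2]
      · refine Or.inr (Or.inr (Or.inr ⟨h1.symm, ?_⟩))
        rw [← h1]
        exact h2
    · exact Or.inr (Or.inr (Or.inl h1))

/-- extend a well-founded subrelation to a well-founded relation on all of `ℕ`. -/
lemma wf_restrict {r : ℕ → ℕ → Prop} {D : Set ℕ} (hw : WellFounded (Subrel r D)) :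
    WellFounded (fun a b => r a b ∧ a ∈ D ∧ b ∈ D) := by
  constructor
  intro a
  by_cases ha : a ∈ D
  · have key : ∀ p : D, Acc (fun a b => r a b ∧ a ∈ D ∧ b ∈ D) p.1 := by
      intro p
      induction p using hw.induction with
      | _ p ih =>
        constructor
        rintro b ⟨hr, hb, -⟩
        exact ih ⟨b, hb⟩ hr
    exact key ⟨a, ha⟩
  · constructor
    rintro b ⟨-, -, hb⟩
    exact absurd hb ha

private lemma lex_right_of_eq {s : ℕ → ℕ → ℕ → Prop} {n m a b : ℕ} (h : n = m)
    (hs : s m a b) : PSigma.Lex (· < · : ℕ → ℕ → Prop) (fun n (x y : ℕ) => s n x y) ⟨n, a⟩ ⟨m, b⟩ := by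
  subst h; exact PSigma.Lex.right _ hs

lemma sigma_wf {L : ℕ → NatOrd} (hL : ∀ n, WFN (L n)) : WFN (sigmaOrd L) := by
  have hlex : WellFounded (PSigma.Lex (· < · : ℕ → ℕ → Prop)
      (fun n => fun a b : ℕ => (L n).2 a b ∧ a ∈ (L n).1 ∧ b ∈ (L n).1)) :=
    WellFounded.psigma_lex (Nat.lt_wfRel.wf) (fun n => wf_restrict (hL n))
  have : Subrelation (Subrel (sigmaOrd L).2 (sigmaOrd L).1)
      (InvImage (PSigma.Lex (· < · : ℕ → ℕ → Prop)
        (fun n => fun a b : ℕ => (L n).2 a b ∧ a ∈ (L n).1 ∧ b ∈ (L n).1))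
        (fun x : (sigmaOrd L).1 => (⟨x.1.unpair.1, x.1.unpair.2⟩ : Σ' _ : ℕ, ℕ))) := by
    rintro a b (h1 | ⟨h1, h1'⟩)
    · exact PSigma.Lex.left _ _ h1
    · have ha2 : a.1.unpair.2 ∈ (L b.1.unpair.1).1 := by rw [← h1]; exact a.2
      have h1'' : (L b.1.unpair.1).2 a.1.unpair.2 b.1.unpair.2 := by rw [← h1]; exact h1'
      exact lex_right_of_eq h1 ⟨h1'', ha2, b.2⟩
  exact Subrelation.wf this (InvImage.wf _ hlex)

/-! ### The embedding construction: mapping `T(Z,Y)` into `T(ℚ,Y)` -/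

noncomputable section Construction

open Classical in
/-- bound for the next rational: strictly below the last entry's first coordinate. -/
def bnd (q : ℕ → ℚ) (l : List ℕ) : ℚ :=
  if h : l = [] then 0 else q ((l.getLast h).unpair.1)

lemma exists_p (q : ℕ → ℚ) (hq : Function.Bijective q) (l : List ℕ) (y N : ℕ) :
    ∃ p, q p < bnd q l ∧ N < listCode (l ++ [Nat.pair p y]) := by
  have hinf : {r : ℚ | r < bnd q l}.Infinite := by
    refine Set.infinite_of_injective_forall_mem
      (f := fun k : ℕ => bnd q l - 1 - k) ?_ ?_
    · intro a b hab
      simp only at hab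
      have : (a : ℚ) = b := by linarith
      exact_mod_cast this
    · intro k
      simp only [Set.mem_setOf_eq]
      have : (0 : ℚ) ≤ k := Nat.cast_nonneg k
      linarith
  have hP : {p : ℕ | q p < bnd q l}.Infinite := by
    have : {p : ℕ | q p < bnd q l} = q ⁻¹' {r : ℚ | r < bnd q l} := rfl
    rw [this]
    exact Set.Infinite.preimage hinf (by rw [hq.2.range_eq]; exact Set.subset_univ _)
  have hfinj : Function.Injective (fun p => listCode (l ++ [Nat.pair p y])) := by
    intro p p' hpp
    have h1 := listCode_inj hpp
    have h2 := List.append_cancel_left h1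
    have h3 : Nat.pair p y = Nat.pair p' y := by simpa using h2
    have := congrArg (fun z => (Nat.unpair z).1) h3
    simpa using this
  have himg : ((fun p => listCode (l ++ [Nat.pair p y])) '' {p : ℕ | q p < bnd q l}).Infinite :=
    Set.Infinite.image (Set.injOn_of_injective hfinj) hP
  obtain ⟨m, hm, hmN⟩ := himg.exists_gt N
  obtain ⟨p, hp, rfl⟩ := hm
  exact ⟨p, hp, hmN⟩

/-- The next entry of the image tree: a fresh entry `(p, y)` with `q p` below the bound of `l`
and with code above all previously used codes. -/
noncomputable def newE (q : ℕ → ℚ) (hq : Function.Bijective q) (l : List ℕ) (e : ℕ) : ℕ :=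
  Nat.pair
    (Classical.choose (exists_p q hq l (Nat.unpair e).2
      ((Finset.range e).attach.sup fun e' => listCode (l ++ [newE q hq l e'.1]))))
    (Nat.unpair e).2
termination_by e
decreasing_by all_goals exact Finset.mem_range.mp e'.2

lemma newE_eq (q : ℕ → ℚ) (hq : Function.Bijective q) (l : List ℕ) (e : ℕ) :
    newE q hq l e = Nat.pair
      (Classical.choose (exists_p q hq l (Nat.unpair e).2
        ((Finset.range e).attach.sup fun e' => listCode (l ++ [newE q hq l e'.1]))))
      (Nat.unpair e).2 := by
  rw [newE]

lemma newE_snd (q : ℕ → ℚ) (hq : Function.Bijective q) (l : List ℕ) (e : ℕ) :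
    (Nat.unpair (newE q hq l e)).2 = (Nat.unpair e).2 := by
  rw [newE_eq]; simp

lemma newE_bnd (q : ℕ → ℚ) (hq : Function.Bijective q) (l : List ℕ) (e : ℕ) :
    q ((Nat.unpair (newE q hq l e)).1) < bnd q l := by
  rw [newE_eq]
  simp only [Nat.unpair_pair]
  exact (Classical.choose_spec (exists_p q hq l (Nat.unpair e).2 _)).1

lemma newE_code_lt (q : ℕ → ℚ) (hq : Function.Bijective q) (l : List ℕ) {e e' : ℕ}
    (h : e < e') : listCode (l ++ [newE q hq l e]) < listCode (l ++ [newE q hq l e']) := by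
  have hspec := (Classical.choose_spec (exists_p q hq l (Nat.unpair e').2
    ((Finset.range e').attach.sup fun e'' => listCode (l ++ [newE q hq l e''.1])))).2
  have hle : listCode (l ++ [newE q hq l e]) ≤
      (Finset.range e').attach.sup fun e'' => listCode (l ++ [newE q hq l e''.1]) := by
    exact Finset.le_sup (f := fun e'' : {x // x ∈ Finset.range e'} =>
      listCode (l ++ [newE q hq l e''.1]))
      (Finset.mem_attach _ ⟨e, Finset.mem_range.mpr h⟩)
  calc listCode (l ++ [newE q hq l e]) ≤ _ := hle
    _ < listCode (l ++ [Nat.pair (Classical.choose _) (Nat.unpair e').2]) := hspec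
    _ = listCode (l ++ [newE q hq l e']) := by rw [← newE_eq]

/-- `tmap`: the recursive map on lists, replacing first coordinates by suitable rationals. -/
noncomputable def tmapAux (q : ℕ → ℚ) (hq : Function.Bijective q) : List ℕ → List ℕ
  | [] => []
  | e :: rest => tmapAux q hq rest ++ [newE q hq (tmapAux q hq rest) e]

noncomputable def tmap (q : ℕ → ℚ) (hq : Function.Bijective q) (s : List ℕ) : List ℕ :=
  tmapAux q hq s.reverse

lemma tmap_nil (q : ℕ → ℚ) (hq : Function.Bijective q) : tmap q hq [] = [] := rfl

lemma tmap_append (q : ℕ → ℚ) (hq : Function.Bijective q) (s : List ℕ) (e : ℕ) :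
    tmap q hq (s ++ [e]) = tmap q hq s ++ [newE q hq (tmap q hq s) e] := by
  unfold tmap
  rw [List.reverse_append]
  rfl

lemma tmap_length (q : ℕ → ℚ) (hq : Function.Bijective q) (s : List ℕ) :
    (tmap q hq s).length = s.length := by
  induction s using List.reverseRecOn with
  | nil => rfl
  | append_singleton s e ih => rw [tmap_append]; simp [ih]

lemma tmap_take (q : ℕ → ℚ) (hq : Function.Bijective q) (s : List ℕ) (i : ℕ) :
    tmap q hq (s.take i) = (tmap q hq s).take i := by
  induction s using List.reverseRecOn with
  | nil => simp [tmap_nil]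
  | append_singleton s e ih =>
    rcases le_or_gt i s.length with h1 | h1
    · rw [List.take_append_of_le_length h1, tmap_append,
        List.take_append_of_le_length (by rw [tmap_length]; exact h1), ih]
    · have h2 : s.length + 1 ≤ i := h1
      rw [List.take_of_length_le (by simp; omega), List.take_of_length_le
        (by rw [tmap_append]; simp [tmap_length]; omega)]

lemma tmap_getD (q : ℕ → ℚ) (hq : Function.Bijective q) (s : List ℕ) {i : ℕ}
    (h : i < s.length) :
    (tmap q hq s).getD i 0 = newE q hq (tmap q hq (s.take i)) (s.getD i 0) := by
  induction s using List.reverseRecOn with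
  | nil => simp at h
  | append_singleton s e ih =>
    rcases lt_or_eq_of_le (Nat.lt_succ_iff.mp (by simpa using h)) with h1 | h1
    · rw [tmap_append, List.getD_append _ _ _ _ (by rw [tmap_length]; exact h1),
        List.getD_append _ _ _ _ h1, List.take_append_of_le_length h1.le, ih h1]
    · subst h1
      rw [tmap_append, List.getD_append_right _ _ _ _ (le_of_eq (tmap_length q hq s)),
        List.take_append_of_le_length le_rfl, List.take_of_length_le le_rfl,
        List.getD_append_right _ _ _ _ le_rfl]
      simp [tmap_length]

/-- `tmap` sends `T(Z,Y)` into `T(ℚ,Y)`, preserving second coordinates. -/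
lemma tmap_mem (q : ℕ → ℚ) (hq : Function.Bijective q) {Zs Ys : Set ℕ}
    {rZ rY : ℕ → ℕ → Prop} {s : List ℕ} (hs : s ∈ DDT Zs Ys rZ rY) :
    tmap q hq s ∈ DDT Set.univ Ys (fun m n => q m < q n) rY := by
  obtain ⟨hmem, hdesc⟩ := hs
  have hlen := tmap_length q hq s
  constructor
  · intro i hi
    have hi' : i < s.length := by rwa [hlen] at hi
    rw [tmap_getD q hq s hi']
    refine ⟨Set.mem_univ _, ?_⟩
    rw [newE_snd]
    exact (hmem i hi').2
  · intro i hi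
    have hi' : i + 1 < s.length := by rwa [hlen] at hi
    constructor
    · -- q-descent of first coordinates
      rw [tmap_getD q hq s hi', tmap_getD q hq s (by omega)]
      have hb := newE_bnd q hq (tmap q hq (s.take (i+1))) (s.getD (i+1) 0)
      have hbnd_eq : bnd q (tmap q hq (s.take (i+1))) =
          q ((Nat.unpair (newE q hq (tmap q hq (s.take i)) (s.getD i 0))).1) := by
        have hne : tmap q hq (s.take (i+1)) ≠ [] := by
          intro hcon
          have := congrArg List.length hcon
          rw [tmap_length] at this
          simp [Nat.min_eq_left (by omega : i + 1 ≤ s.length)] at this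
        rw [bnd, dif_neg hne]
        congr 1
        have hlast : (tmap q hq (s.take (i+1))).getLast hne =
            (tmap q hq (s.take (i+1))).getD ((tmap q hq (s.take (i+1))).length - 1) 0 := by
          rw [List.getLast_eq_getElem, List.getD_eq_getElem]
        rw [hlast]
        have hlen2 : (tmap q hq (s.take (i+1))).length = i + 1 := by
          rw [tmap_length]; simp [Nat.min_eq_left (by omega : i + 1 ≤ s.length)]
        rw [hlen2]
        simp only [Nat.add_sub_cancel]
        have h5 : i < (s.take (i+1)).length := by rw [List.length_take]; omega
        have h6 := tmap_getD q hq (s.take (i+1)) h5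
        rw [h6, List.take_take, Nat.min_eq_left (Nat.le_succ i)]
        rw [getD_of_prefix (List.take_prefix (i+1) s) h5]
      show q (Nat.unpair (newE q hq (tmap q hq (s.take (i+1))) (s.getD (i+1) 0))).1 <
        q (Nat.unpair (newE q hq (tmap q hq (s.take i)) (s.getD i 0))).1
      rw [← hbnd_eq]
      exact hb
    · rw [tmap_getD q hq s hi', tmap_getD q hq s (by omega), newE_snd, newE_snd]
      exact (hdesc i hi').2

end Construction

/-! ### The map `Phi` from `T(Z,Y)` into `T(ℚ*Y, X)` -/

noncomputable section PhiSection

variable (q : ℕ → ℚ) (hq : Function.Bijective q) (x : ℕ → ℕ)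

/-- The node-level embedding: a node `s` of `T(Z,Y)` is mapped to the descending sequence
of codes of the images under `tmap` of its nonempty initial segments, paired with a fixed
descending sequence of `X`. -/
noncomputable def Phi (s : List ℕ) : List ℕ :=
  (List.range s.length).map fun i => Nat.pair (listCode (tmap q hq (s.take (i+1)))) (x i)

lemma Phi_length (s : List ℕ) : (Phi q hq x s).length = s.length := by simp [Phi]

lemma Phi_getD {s : List ℕ} {i : ℕ} (h : i < s.length) :
    (Phi q hq x s).getD i 0 = Nat.pair (listCode (tmap q hq (s.take (i+1)))) (x i) :=
  range_map_getD _ h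

lemma take_eq_of_prefix {t s : List ℕ} (h : t <+: s) {j : ℕ} (hj : j ≤ t.length) :
    t.take j = s.take j := by
  obtain ⟨u, rfl⟩ := h
  rw [List.take_append_of_le_length hj]

lemma Phi_KB {s t : List ℕ} (h : KB s t) : KB (Phi q hq x s) (Phi q hq x t) := by
  rcases h with ⟨hp, hne⟩ | ⟨i, hi1, hi2, hprev, hlt⟩
  · have hlen := KB_length_lt hp hne
    refine Or.inl ⟨prefix_of_getD (by rw [Phi_length, Phi_length]; omega) ?_, ?_⟩
    · intro j hj
      rw [Phi_length] at hj
      rw [Phi_getD q hq x hj, Phi_getD q hq x (by omega : j < s.length),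
        take_eq_of_prefix hp (by omega : j + 1 ≤ t.length)]
    · intro hcon
      have := congrArg List.length hcon
      rw [Phi_length, Phi_length] at this
      omega
  · refine Or.inr ⟨i, by rw [Phi_length]; omega, by rw [Phi_length]; omega, ?_, ?_⟩
    · intro j hj
      rw [Phi_getD q hq x (by omega : j < s.length), Phi_getD q hq x (by omega : j < t.length)]
      have : s.take (j+1) = t.take (j+1) :=
        take_eq_take_of_getD (by omega) (by omega) (fun j' hj' => hprev j' (by omega))
      rw [this]
    · rw [Phi_getD q hq x hi1, Phi_getD q hq x hi2]
      have hti : s.take i = t.take i :=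
        take_eq_take_of_getD (by omega) (by omega) (fun j' hj' => hprev j' hj')
      rw [take_succ_getD hi1, take_succ_getD hi2, ← hti, tmap_append, tmap_append]
      exact Nat.pair_lt_pair_left _ (newE_code_lt q hq _ hlt)

lemma Phi_mem {Zs Ys Xs : Set ℕ} {rZ rY rX : ℕ → ℕ → Prop} {s : List ℕ}
    (hs : s ∈ DDT Zs Ys rZ rY)
    (hxmem : ∀ k, x k ∈ Xs) (hxdesc : ∀ k, rX (x (k+1)) (x k)) :
    Phi q hq x s ∈ DDT (ddStar (ratOrd q) (Ys, rY)).1 Xs (ddStar (ratOrd q) (Ys, rY)).2 rX := by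
  have htree := DDT_isTree Zs Ys rZ rY
  have htake : ∀ i, s.take i ∈ DDT Zs Ys rZ rY := fun i => htree s hs _ (List.take_prefix _ _)
  constructor
  · intro i hi
    rw [Phi_length] at hi
    rw [Phi_getD q hq x hi]
    refine ⟨⟨tmap q hq (s.take (i+1)), tmap_mem q hq (htake (i+1)), by simp⟩, by simp [hxmem i]⟩
  · intro i hi
    rw [Phi_length] at hi
    rw [Phi_getD q hq x (by omega : i < s.length), Phi_getD q hq x (by omega : i + 1 < s.length)]
    constructor
    · simp only [Nat.unpair_pair]
      refine ⟨tmap q hq (s.take (i+2)), tmap_mem q hq (htake (i+2)),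
        tmap q hq (s.take (i+1)), tmap_mem q hq (htake (i+1)), rfl, rfl, ?_⟩
      refine KB_of_proper_prefix ?_ ?_
      · have e1 : s.take (i+1) = (s.take (i+2)).take (i+1) := by
          rw [List.take_take, Nat.min_eq_left (by omega)]
        rw [e1, tmap_take]
        exact List.take_prefix _ _
      · intro hcon
        have := congrArg List.length hcon
        rw [tmap_length, tmap_length] at this
        simp [List.length_take] at this
        omega
    · simp only [Nat.unpair_pair]
      exact hxdesc i

end PhiSection

/-! ### Assembling the main theorem -/

lemma mem_sigma {L : ℕ → NatOrd} {m a : ℕ} (h : a ∈ (L m).1) :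
    Nat.pair m a ∈ (sigmaOrd L).1 := by
  show (Nat.unpair (Nat.pair m a)).2 ∈ (L (Nat.unpair (Nat.pair m a)).1).1
  rw [Nat.unpair_pair]
  exact h

lemma sigma_rel_iff {L : ℕ → NatOrd} {m a b : ℕ} :
    (sigmaOrd L).2 (Nat.pair m a) (Nat.pair m b) ↔ (L m).2 a b := by
  show (_ < _ ∨ _) ↔ _
  rw [Nat.unpair_pair, Nat.unpair_pair]
  simp

lemma sigma_rel_lt {L : ℕ → NatOrd} {m m' a b : ℕ} (h : m < m') :
    (sigmaOrd L).2 (Nat.pair m a) (Nat.pair m' b) := by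
  refine Or.inl ?_
  rw [Nat.unpair_pair, Nat.unpair_pair]
  exact h

lemma isWellOrder_of_IsWON {A : NatOrd} (hA : IsWON A) :
    IsWellOrder A.1 (Subrel A.2 A.1) where
  trichotomous := by
    rintro a b hab hba
    rcases hA.1.2.2 a.1 a.2 b.1 b.2 with h1 | h1 | h1
    · exact absurd h1 hab
    · exact Subtype.ext h1
    · exact absurd h1 hba
  wf := hA.2

theorem Uord_wellOrdered' (q : ℕ → ℚ) (hq : Function.Bijective q)
    (X Y : ℕ → NatOrd) (hX : ∀ n, IsLinN (X n)) (hY : ∀ n, IsLinN (Y n))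
    (h : ∀ n, WFN (X n) ∨ WFN (Y n)) :
    IsWON (Uord q X Y) ∧
    ∀ Z : NatOrd, IsLinN Z → ∀ n, ¬WFN (X n) →
      IsWON (ddStar Z (Y n)) ∧
      Nonempty (PrincipalSeg (Subrel (ddStar Z (Y n)).2 (ddStar Z (Y n)).1)
        (Subrel (Uord q X Y).2 (Uord q X Y).1)) := by
  classical
  have hWON : IsWON (Uord q X Y) := by
    constructor
    · exact sigma_linear (fun n => ddStar_linear _ _)
    · refine sigma_wf (fun n => ?_)
      rcases h n with hXwf | hYwf
      · exact ddStar_wf (noBranch_DDT_right hXwf)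
      · have hW : WFN (ddStar (ratOrd q) (Y n)) := ddStar_wf (noBranch_DDT_right hYwf)
        exact ddStar_wf (noBranch_DDT_left hW)
  refine ⟨hWON, ?_⟩
  intro Z hZ n hXn
  have hYwf : WFN (Y n) := (h n).resolve_left hXn
  have hZYwon : IsWON (ddStar Z (Y n)) := ⟨ddStar_linear _ _, ddStar_wf (noBranch_DDT_right hYwf)⟩
  refine ⟨hZYwon, ?_⟩
  haveI i1 : IsWellOrder _ (Subrel (ddStar Z (Y n)).2 (ddStar Z (Y n)).1) :=
    isWellOrder_of_IsWON hZYwon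
  haveI i2 : IsWellOrder _ (Subrel (Uord q X Y).2 (Uord q X Y).1) :=
    isWellOrder_of_IsWON hWON
  -- a descending sequence in `X n`
  obtain ⟨xf, hxf⟩ := exists_descending hXn
  set x : ℕ → ℕ := fun k => (xf k).1 with hxdef
  have hxmem : ∀ k, x k ∈ (X n).1 := fun k => (xf k).2
  have hxdesc : ∀ k, (X n).2 (x (k+1)) (x k) := fun k => hxf k
  -- the top element
  set t0 : ℕ := Nat.pair (n+1) (listCode ([] : List ℕ)) with ht0def
  have ht0 : t0 ∈ (Uord q X Y).1 :=
    mem_sigma (⟨[], nil_mem_DDT _ _ _ _, rfl⟩ :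
      listCode ([] : List ℕ) ∈ (ddStar (ddStar (ratOrd q) (Y (n+1))) (X (n+1))).1)
  -- decoding function
  set dec : {v // v ∈ (ddStar Z (Y n)).1} → List ℕ := fun a => Classical.choose a.2 with hdec
  have decspec : ∀ a : {v // v ∈ (ddStar Z (Y n)).1},
      dec a ∈ DDT Z.1 (Y n).1 Z.2 (Y n).2 ∧
      listCode (dec a) = a.1 := fun a => Classical.choose_spec a.2
  -- the embedding
  have hPhimem : ∀ a, Phi q hq x (dec a) ∈
      DDT (ddStar (ratOrd q) (Y n)).1 (X n).1 (ddStar (ratOrd q) (Y n)).2 (X n).2 :=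
    fun a => Phi_mem q hq x (decspec a).1 hxmem hxdesc
  have hmemU : ∀ a, Nat.pair n (listCode (Phi q hq x (dec a))) ∈ (Uord q X Y).1 :=
    fun a => mem_sigma (⟨Phi q hq x (dec a), hPhimem a, rfl⟩ :
      listCode (Phi q hq x (dec a)) ∈ (ddStar (ddStar (ratOrd q) (Y n)) (X n)).1)
  have hltTop : ∀ a, Subrel (Uord q X Y).2 (Uord q X Y).1
      ⟨Nat.pair n (listCode (Phi q hq x (dec a))), hmemU a⟩ ⟨t0, ht0⟩ := by
    intro a
    show (Uord q X Y).2 (Nat.pair n (listCode (Phi q hq x (dec a)))) t0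
    rw [ht0def]
    exact sigma_rel_lt (Nat.lt_succ_self n)
  -- KB equivalences
  have hKBiff : ∀ a b, KB (Phi q hq x (dec a)) (Phi q hq x (dec b)) ↔ KB (dec a) (dec b) := by
    intro a b
    constructor
    · intro hkb
      by_cases heq : dec a = dec b
      · rw [heq] at hkb; exact absurd hkb (KB_irrefl _)
      · rcases KB_total heq with h1 | h1
        · exact h1
        · exact absurd (KB_trans hkb (Phi_KB q hq x h1)) (KB_irrefl _)
    · exact Phi_KB q hq x
  have hZYrel : ∀ a b : {v // v ∈ (ddStar Z (Y n)).1},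
      (ddStar Z (Y n)).2 a.1 b.1 ↔ KB (dec a) (dec b) := by
    intro a b
    constructor
    · rintro ⟨s', hs', t', ht', hcs, hct, hkb⟩
      have e1 : dec a = s' := listCode_inj ((decspec a).2.trans hcs.symm)
      have e2 : dec b = t' := listCode_inj ((decspec b).2.trans hct.symm)
      rw [e1, e2]; exact hkb
    · intro hkb
      exact ⟨dec a, (decspec a).1, dec b, (decspec b).1, (decspec a).2, (decspec b).2, hkb⟩
  have hUrel : ∀ a b, (Uord q X Y).2 (Nat.pair n (listCode (Phi q hq x (dec a))))
      (Nat.pair n (listCode (Phi q hq x (dec b)))) ↔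
      KB (Phi q hq x (dec a)) (Phi q hq x (dec b)) := by
    intro a b
    refine Iff.trans (sigma_rel_iff (L := fun m => ddStar (ddStar (ratOrd q) (Y m)) (X m))) ?_
    constructor
    · rintro ⟨s', hs', t', ht', hcs, hct, hkb⟩
      have e1 : Phi q hq x (dec a) = s' := listCode_inj hcs.symm
      have e2 : Phi q hq x (dec b) = t' := listCode_inj hct.symm
      rw [e1, e2]; exact hkb
    · intro hkb
      exact ⟨_, hPhimem a, _, hPhimem b, rfl, rfl, hkb⟩
  let F : {v // v ∈ (ddStar Z (Y n)).1} →
      {b : {u // u ∈ (Uord q X Y).1} // Subrel (Uord q X Y).2 (Uord q X Y).1 b ⟨t0, ht0⟩} :=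
    fun a => ⟨⟨Nat.pair n (listCode (Phi q hq x (dec a))), hmemU a⟩, hltTop a⟩
  have hFinj : Function.Injective F := by
    intro a b hab
    have h1 : Nat.pair n (listCode (Phi q hq x (dec a))) =
        Nat.pair n (listCode (Phi q hq x (dec b))) := congrArg (fun z => z.1.1) hab
    have h2 := congrArg (fun z => (Nat.unpair z).2) h1
    simp only [Nat.unpair_pair] at h2
    have h3 : Phi q hq x (dec a) = Phi q hq x (dec b) := listCode_inj h2
    have h4 : dec a = dec b := by
      by_contra hne
      rcases KB_total hne with h5 | h5
      · exact KB_irrefl _ (h3 ▸ Phi_KB q hq x h5)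
      · exact KB_irrefl _ (h3 ▸ Phi_KB q hq x h5)
    apply Subtype.ext
    rw [← (decspec a).2, ← (decspec b).2, h4]
  let emb : Subrel (ddStar Z (Y n)).2 (ddStar Z (Y n)).1 ↪r
      Subrel (Subrel (Uord q X Y).2 (Uord q X Y).1)
        {b | Subrel (Uord q X Y).2 (Uord q X Y).1 b ⟨t0, ht0⟩} :=
    ⟨⟨F, hFinj⟩, by
      intro a b
      show (Uord q X Y).2 (Nat.pair n (listCode (Phi q hq x (dec a))))
        (Nat.pair n (listCode (Phi q hq x (dec b)))) ↔ _
      rw [hUrel a b, hKBiff a b]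
      exact (hZYrel a b).symm⟩
  haveI i3 : IsWellOrder _ (Subrel (Subrel (Uord q X Y).2 (Uord q X Y).1)
      {b | Subrel (Uord q X Y).2 (Uord q X Y).1 b ⟨t0, ht0⟩}) :=
    (Subrel.relEmbedding _ _).isWellOrder
  have hle : Ordinal.type (Subrel (ddStar Z (Y n)).2 (ddStar Z (Y n)).1) ≤
      Ordinal.type (Subrel (Subrel (Uord q X Y).2 (Uord q X Y).1)
        {b | Subrel (Uord q X Y).2 (Uord q X Y).1 b ⟨t0, ht0⟩}) :=
    Ordinal.type_le_iff'.mpr ⟨emb⟩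
  have hlt2 : Ordinal.type (Subrel (Subrel (Uord q X Y).2 (Uord q X Y).1)
      {b | Subrel (Uord q X Y).2 (Uord q X Y).1 b ⟨t0, ht0⟩}) <
      Ordinal.type (Subrel (Uord q X Y).2 (Uord q X Y).1) := by
    refine lt_of_eq_of_lt (Ordinal.type_subrel (Subrel (Uord q X Y).2 (Uord q X Y).1) ⟨t0, ht0⟩) ?_
    exact Ordinal.typein_lt_type _ _
  exact Ordinal.type_lt_iff.mp (lt_of_le_of_lt hle hlt2)

/-- If `(X_n)`, `(Y_n)` are sequences of linear orders on subsets
of ℕ such that for every `n` at least one of `X_n`, `Y_n` is well-founded, then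
`U = Σ_n (ℚ_q*Y_n)*X_n` is a well order; and for every linear order `X` on a subset
of ℕ and every `n` with `X_n` not well-founded, `X*Y_n` is a well order with
`|X*Y_n| < |U|` (there is a principal segment embedding into `U`). -/
theorem Uord_wellOrdered (q : ℕ → ℚ) (hq : Function.Bijective q)
    (X Y : ℕ → NatOrd) (hX : ∀ n, IsLinN (X n)) (hY : ∀ n, IsLinN (Y n))
    (h : ∀ n, WFN (X n) ∨ WFN (Y n)) :
    IsWON (Uord q X Y) ∧
    ∀ Z : NatOrd, IsLinN Z → ∀ n, ¬WFN (X n) →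
      IsWON (ddStar Z (Y n)) ∧
      Nonempty (PrincipalSeg (Subrel (ddStar Z (Y n)).2 (ddStar Z (Y n)).1)
        (Subrel (Uord q X Y).2 (Uord q X Y).1)) := by
  exact Uord_wellOrdered' q hq X Y hX hY h
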